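/- Let G be a compact group, v : G → GL(V) a continuous finite-dimensional representation on a complex inner product space V, and h the normalized Haar measure. Define y = ∫ v(s)* v(s) dh(s). Then y is positive and invertible, and w(s) = y^{1/2} v(s) y^{-1/2} defines a representation equivalent to v that is unitary: w(s)* w(s) = 1 for all s in G. -/

import Mathlib

open MeasureTheory ContinuousLinearMap

lemma aux_inv {V : Type*} [NormedAddCommGroup V] [InnerProductSpace ℂ V]
    [FiniteDimensional ℂ V] (f : V →L[ℂ] V) (hf : Function.Injective f) :
    ∃ f' : V →L[ℂ] V, f.comp f' = 1 ∧ f'.comp f = 1 := by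
  have hsurj : Function.Surjective (f : V →ₗ[ℂ] V) :=
    LinearMap.injective_iff_surjective.mp hf
  let e := LinearEquiv.ofBijective (f : V →ₗ[ℂ] V) ⟨hf, hsurj⟩
  let eL := e.toContinuousLinearEquiv
  refine ⟨(eL.symm : V →L[ℂ] V), ?_, ?_⟩ <;> ext x
  · exact e.apply_symm_apply x
  · exact e.symm_apply_apply x

theorem unitarizable_of_compact
    (G : Type*) [Group G] [TopologicalSpace G] [IsTopologicalGroup G]
    [CompactSpace G] [MeasurableSpace G] [BorelSpace G]
    (h : Measure G) [h.IsHaarMeasure] [IsProbabilityMeasure h]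
    (V : Type*) [NormedAddCommGroup V] [InnerProductSpace ℂ V]
    [FiniteDimensional ℂ V]
    (v : G →* (V →L[ℂ] V)ˣ)
    (hcont : Continuous fun s : G => ((v s : V →L[ℂ] V)))
    (y : V →L[ℂ] V)
    (hy : y = ∫ s, (ContinuousLinearMap.adjoint (v s : V →L[ℂ] V)).comp
      (v s : V →L[ℂ] V) ∂h) :
    y.IsPositive ∧
    (∃ y' : V →L[ℂ] V, y.comp y' = 1 ∧ y'.comp y = 1) ∧
    (∃ r r' : V →L[ℂ] V, r.IsPositive ∧ r.comp r = y ∧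
      r.comp r' = 1 ∧ r'.comp r = 1 ∧
      ∀ s : G,
        (ContinuousLinearMap.adjoint (r.comp ((v s : V →L[ℂ] V).comp r'))).comp
          (r.comp ((v s : V →L[ℂ] V).comp r')) = 1) := by
  haveI : CompleteSpace V := FiniteDimensional.complete ℂ V
  set A : G → (V →L[ℂ] V) := fun s =>
    (ContinuousLinearMap.adjoint (v s : V →L[ℂ] V)).comp (v s : V →L[ℂ] V) with hA
  -- continuity and integrability
  have hAcont : Continuous A := by
    exact ((ContinuousLinearMap.adjoint :
      (V →L[ℂ] V) ≃ₗᵢ⋆[ℂ] (V →L[ℂ] V)).continuous.comp hcont).clm_comp hcont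
  have hAint : Integrable A h := by
    refine hAcont.integrable_of_hasCompactSupport ?_
    exact HasCompactSupport.of_compactSpace _
  -- right invariance of Haar measure on a compact group
  haveI : h.IsMulRightInvariant := by
    constructor
    intro g
    haveI : IsProbabilityMeasure (Measure.map (· * g) h) :=
      Measure.isProbabilityMeasure_map (measurable_mul_const g).aemeasurable
    exact Measure.isHaarMeasure_eq_of_isProbabilityMeasure _ _
  -- pointwise inner-product formula
  have happ : ∀ x : V, y x = ∫ s, A s x ∂h := by
    intro x; rw [hy]; exact ContinuousLinearMap.integral_apply hAint x
  have hinner : ∀ x z : V, (inner ℂ z (y x) : ℂ) = ∫ s, inner ℂ ((v s : V →L[ℂ] V) z) ((v s : V →L[ℂ] V) x) ∂h := by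
    intro x z
    have h1 : (inner ℂ z (y x) : ℂ) = ∫ s, (inner ℂ z (A s x) : ℂ) ∂h := by
      have h2 := (innerSL ℂ z).integral_comp_comm (hAint.apply_continuousLinearMap x)
      rw [happ x]
      simpa using h2.symm
    rw [h1]
    refine integral_congr_ae (Filter.Eventually.of_forall fun s => ?_)
    simp only [hA, ContinuousLinearMap.comp_apply]
    exact ContinuousLinearMap.adjoint_inner_right _ _ _
  have hinteg : ∀ x z : V, Integrable (fun s => (inner ℂ ((v s : V →L[ℂ] V) z) ((v s : V →L[ℂ] V) x) : ℂ)) h := by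
    intro x z
    have hc : Continuous fun s => (inner ℂ ((v s : V →L[ℂ] V) z) ((v s : V →L[ℂ] V) x) : ℂ) :=
      Continuous.inner (hcont.clm_apply continuous_const) (hcont.clm_apply continuous_const)
    exact hc.integrable_of_hasCompactSupport (HasCompactSupport.of_compactSpace _)
  -- y is self-adjoint
  have hsa : IsSelfAdjoint y := by
    rw [ContinuousLinearMap.isSelfAdjoint_iff_isSymmetric]
    intro x z
    simp only [ContinuousLinearMap.coe_coe]
    have h1 : (inner ℂ (y x) z : ℂ) = (starRingEnd ℂ) (inner ℂ z (y x)) := (inner_conj_symm _ _).symm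
    rw [h1, hinner x z, ← integral_conj]
    have h2 : (inner ℂ x (y z) : ℂ) = ∫ s, inner ℂ ((v s : V →L[ℂ] V) x) ((v s : V →L[ℂ] V) z) ∂h :=
      hinner z x
    rw [h2]
    congr 1; ext s
    exact inner_conj_symm _ _
  -- positivity
  have hre : ∀ x : V, RCLike.re (inner ℂ (y x) x : ℂ) = ∫ s, ‖(v s : V →L[ℂ] V) x‖^2 ∂h := by
    intro x
    have h0 : (inner ℂ (y x) x : ℂ) = (starRingEnd ℂ) (inner ℂ x (y x)) := (inner_conj_symm _ _).symm
    rw [h0, RCLike.conj_re, hinner x x, ← integral_re (hinteg x x)]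
    congr 1; ext s
    exact inner_self_eq_norm_sq (𝕜 := ℂ) _
  have hypos : y.IsPositive := by
    refine ⟨ContinuousLinearMap.isSelfAdjoint_iff_isSymmetric.mp hsa, fun x => ?_⟩
    have h0 : y.reApplyInnerSelf x = ∫ s, ‖(v s : V →L[ℂ] V) x‖^2 ∂h := hre x
    rw [h0]
    exact integral_nonneg fun s => sq_nonneg _
  -- injectivity of y
  have hyinj : Function.Injective y := by
    intro x₁ x₂ hx
    rw [← sub_eq_zero]
    rw [← sub_eq_zero, ← map_sub] at hx
    set x := x₁ - x₂
    by_contra hne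
    have hz : (0:ℝ) = ∫ s, ‖(v s : V →L[ℂ] V) x‖^2 ∂h := by
      rw [← hre x, hx]; simp
    have hint : Integrable (fun s => ‖(v s : V →L[ℂ] V) x‖^2) h := by
      have hc : Continuous fun s => ‖(v s : V →L[ℂ] V) x‖^2 :=
        ((hcont.clm_apply continuous_const).norm).pow 2
      exact hc.integrable_of_hasCompactSupport (HasCompactSupport.of_compactSpace _)
    have hae : (fun s => ‖(v s : V →L[ℂ] V) x‖^2) =ᵐ[h] 0 :=
      (integral_eq_zero_iff_of_nonneg (fun s => sq_nonneg _) hint).mp hz.symm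
    have heq : (fun s => ‖(v s : V →L[ℂ] V) x‖^2) = 0 := by
      refine (Continuous.ae_eq_iff_eq h ?_ continuous_const).mp hae
      exact ((hcont.clm_apply continuous_const).norm).pow 2
    have h1 : ‖(v 1 : V →L[ℂ] V) x‖^2 = 0 := congrFun heq 1
    rw [map_one] at h1
    simp only [Units.val_one, ContinuousLinearMap.one_apply] at h1
    exact hne (norm_eq_zero.mp (by exact pow_eq_zero_iff (by norm_num) |>.mp h1))
  -- inverse of y
  obtain ⟨y', hy1, hy2⟩ := aux_inv y hyinj
  -- square root via continuous functional calculus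
  have hy0 : (0:V →L[ℂ] V) ≤ y := (ContinuousLinearMap.nonneg_iff_isPositive y).mpr hypos
  set r : V →L[ℂ] V := CFC.sqrt y with hrdef
  have hr0 : (0:V →L[ℂ] V) ≤ r := CFC.sqrt_nonneg (a := y)
  have hrpos : r.IsPositive := (ContinuousLinearMap.nonneg_iff_isPositive r).mp hr0
  have hrry : r * r = y := CFC.sqrt_mul_sqrt_self y hy0
  have hrrcomp : r.comp r = y := hrry
  have hrinj : Function.Injective r := by
    intro a b hab
    apply hyinj
    have h1 : y a = r (r a) := by rw [← hrrcomp]; rfl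
    have h2 : y b = r (r b) := by rw [← hrrcomp]; rfl
    rw [h1, h2, hab]
  obtain ⟨r', hr1, hr2⟩ := aux_inv r hrinj
  have hr1' : r * r' = 1 := hr1
  have hr2' : r' * r = 1 := hr2
  have hstar_r : star r = r := hrpos.isSelfAdjoint
  have hstar_r' : star r' = r' := by
    have e1 : star r' * r = 1 := by
      rw [← hstar_r, ← star_mul, hr1', star_one]
    calc star r' = star r' * (r * r') := by rw [hr1', mul_one]
      _ = (star r' * r) * r' := by rw [mul_assoc]
      _ = r' := by rw [e1, one_mul]
  -- invariance of y under the representation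
  have hGop : ∀ t : G, star (v t : V →L[ℂ] V) * (y * (v t : V →L[ℂ] V)) = y := by
    intro t
    rw [ContinuousLinearMap.star_eq_adjoint]
    ext x
    refine ext_inner_left ℂ fun z => ?_
    have e1 : (inner ℂ z ((ContinuousLinearMap.adjoint (v t : V →L[ℂ] V) *
        (y * (v t : V →L[ℂ] V))) x) : ℂ)
        = inner ℂ ((v t : V →L[ℂ] V) z) (y ((v t : V →L[ℂ] V) x)) := by
      rw [ContinuousLinearMap.mul_apply, ContinuousLinearMap.mul_apply]
      exact ContinuousLinearMap.adjoint_inner_right _ _ _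
    rw [e1, hinner ((v t : V →L[ℂ] V) x) ((v t : V →L[ℂ] V) z), hinner x z]
    have e2 : ∀ s : G, (inner ℂ ((v s : V →L[ℂ] V) ((v t : V →L[ℂ] V) z))
        ((v s : V →L[ℂ] V) ((v t : V →L[ℂ] V) x)) : ℂ)
        = inner ℂ ((v (s * t) : V →L[ℂ] V) z) ((v (s * t) : V →L[ℂ] V) x) := by
      intro s
      simp [map_mul, Units.val_mul, ContinuousLinearMap.mul_apply]
    rw [integral_congr_ae (Filter.Eventually.of_forall e2)]
    exact integral_mul_right_eq_self
      (fun s => (inner ℂ ((v s : V →L[ℂ] V) z) ((v s : V →L[ℂ] V) x) : ℂ)) t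
  refine ⟨hypos, ⟨y', hy1, hy2⟩, r, r', hrpos, hrrcomp, hr1, hr2, fun s => ?_⟩
  -- unitarity
  show ContinuousLinearMap.adjoint (r * ((v s : V →L[ℂ] V) * r')) *
    (r * ((v s : V →L[ℂ] V) * r')) = 1
  rw [← ContinuousLinearMap.star_eq_adjoint]
  set u : V →L[ℂ] V := (v s : V →L[ℂ] V)
  calc star (r * (u * r')) * (r * (u * r'))
      = (r' * star u) * ((r * r) * (u * r')) := by
        rw [star_mul, star_mul, hstar_r, hstar_r']
        simp only [mul_assoc]
    _ = r' * (star u * (y * u)) * r' := by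
        rw [hrry]
        simp only [mul_assoc]
    _ = r' * y * r' := by rw [hGop s]
    _ = (r' * r) * (r * r') := by rw [← hrry]; simp only [mul_assoc]
    _ = 1 := by rw [hr1', hr2', mul_one]
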